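/- For the heat semigroup (S_t) on ℝ, for every λ ∈ ℝ and T > 0 there is a constant C'(λ,T) > 0 such that inf_{t ∈ [0,T]} S_t φ_λ(x) ≥ C'(λ,T) φ_λ(x) for all x ∈ ℝ, where φ_λ(x) = e^{-λ|x|}. -/

import Mathlib

open MeasureTheory Set

/-- The one-dimensional Gaussian heat kernel `p_t(x) = (2πt)^{-1/2} exp(-x²/(2t))`. -/
noncomputable def heatKernel (t x : ℝ) : ℝ :=
  (Real.sqrt (2 * Real.pi * t))⁻¹ * Real.exp (-(x ^ 2) / (2 * t))

/-- The heat semigroup `S_t φ(x) = ∫ p_t(x−y) φ(y) dy`, with `S_0 φ = φ`. -/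
noncomputable def heatS (t : ℝ) (φ : ℝ → ℝ) (x : ℝ) : ℝ :=
  if t = 0 then φ x else ∫ y, heatKernel t (x - y) * φ y

lemma heat_integrable (t x lam : ℝ) (ht : 0 < t) :
    Integrable (fun y => heatKernel t (x - y) * Real.exp (-lam * |y|)) := by
  set a := |lam| with ha
  have ha0 : 0 ≤ a := abs_nonneg _
  have hK : 0 < (Real.sqrt (2 * Real.pi * t))⁻¹ := by
    have : 0 < 2 * Real.pi * t := by positivity
    positivity
  set K : ℝ := (Real.sqrt (2 * Real.pi * t))⁻¹ * Real.exp (x ^ 2 / (2 * t) + 2 * t * a ^ 2)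
  have hg : Integrable (fun y : ℝ => K * Real.exp (-(8 * t)⁻¹ * y ^ 2)) :=
    (integrable_exp_neg_mul_sq (by positivity : (0:ℝ) < (8 * t)⁻¹)).const_mul K
  refine hg.mono' ?_ ?_
  · apply Continuous.aestronglyMeasurable
    unfold heatKernel
    continuity
  · filter_upwards with y
    have hf0 : 0 ≤ heatKernel t (x - y) * Real.exp (-lam * |y|) := by
      unfold heatKernel; positivity
    rw [Real.norm_of_nonneg hf0]
    have h1 : -lam * |y| ≤ a * |y| := by
      have := neg_abs_le lam
      nlinarith [abs_nonneg y]
    have key : -((x - y) ^ 2) / (2 * t) + -lam * |y| ≤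
        x ^ 2 / (2 * t) + 2 * t * a ^ 2 + -(8 * t)⁻¹ * y ^ 2 := by
      rw [div_add' _ _ _ (by positivity : (2*t) ≠ 0),
        div_le_iff₀ (by positivity : (0:ℝ) < 2*t)]
      have expand : (x ^ 2 / (2 * t) + 2 * t * a ^ 2 + -(8 * t)⁻¹ * y ^ 2) * (2 * t)
          = x ^ 2 + 4 * t ^ 2 * a ^ 2 - y ^ 2 / 4 := by
        field_simp; ring
      rw [expand]
      nlinarith [sq_nonneg (2 * x - y), sq_nonneg (|y| - 4 * t * a), abs_nonneg y, sq_abs y]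
    calc heatKernel t (x - y) * Real.exp (-lam * |y|)
        = (Real.sqrt (2 * Real.pi * t))⁻¹ *
          Real.exp (-((x - y) ^ 2) / (2 * t) + -lam * |y|) := by
          rw [heatKernel, mul_assoc, ← Real.exp_add]
      _ ≤ (Real.sqrt (2 * Real.pi * t))⁻¹ *
          Real.exp (x ^ 2 / (2 * t) + 2 * t * a ^ 2 + -(8 * t)⁻¹ * y ^ 2) :=
          mul_le_mul_of_nonneg_left (Real.exp_le_exp.mpr key) hK.le
      _ = K * Real.exp (-(8 * t)⁻¹ * y ^ 2) := by
          rw [Real.exp_add, ← mul_assoc]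

/-- Lower bound for the heat semigroup on exponentials: for all `λ ∈ ℝ` and `T > 0` there is a
constant `C'(λ,T) > 0` with `S_t φ_λ(x) ≥ C' φ_λ(x)` for all `t ∈ [0,T]`, `x ∈ ℝ`, where
`φ_λ(x) = e^{-λ|x|}`. -/
theorem heatS_exp_lower_bound (lam T : ℝ) (hT : 0 < T) :
    ∃ C' : ℝ, 0 < C' ∧ ∀ t ∈ Icc (0 : ℝ) T, ∀ x : ℝ,
      C' * Real.exp (-lam * |x|) ≤ heatS t (fun y => Real.exp (-lam * |y|)) x := by
  set a := |lam| with ha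
  have ha0 : 0 ≤ a := abs_nonneg _
  have hpi : 0 < Real.pi := Real.pi_pos
  refine ⟨min 1 (2 * (Real.sqrt (2 * Real.pi))⁻¹ * Real.exp (-(1:ℝ)/2) *
      Real.exp (-a * Real.sqrt T)), ?_, ?_⟩
  · have : (0:ℝ) < Real.sqrt (2 * Real.pi) := Real.sqrt_pos.mpr (by positivity)
    positivity
  intro t ht x
  obtain ⟨ht0, htT⟩ := ht
  rcases eq_or_lt_of_le ht0 with h0 | h0
  · subst h0
    rw [show heatS 0 (fun y => Real.exp (-lam * |y|)) x = Real.exp (-lam * |x|) from if_pos rfl]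
    have h1 : 0 < Real.exp (-lam * |x|) := Real.exp_pos _
    nlinarith [min_le_left (1:ℝ) (2 * (Real.sqrt (2 * Real.pi))⁻¹ * Real.exp (-(1:ℝ)/2) *
      Real.exp (-a * Real.sqrt T))]
  · rw [heatS, if_neg h0.ne']
    set f : ℝ → ℝ := fun y => heatKernel t (x - y) * Real.exp (-lam * |y|) with hf
    have hint : Integrable f := heat_integrable t x lam h0
    have hst : 0 < Real.sqrt t := Real.sqrt_pos.mpr h0
    set s : Set ℝ := Icc (x - Real.sqrt t) (x + Real.sqrt t) with hs
    set c : ℝ := (Real.sqrt (2 * Real.pi * t))⁻¹ * Real.exp (-(1:ℝ)/2) *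
      Real.exp (-lam * |x| - a * Real.sqrt t) with hc
    have hKpos : 0 < (Real.sqrt (2 * Real.pi * t))⁻¹ := by
      have : 0 < 2 * Real.pi * t := by positivity
      positivity
    -- f ≥ c on s
    have hlow : ∀ y ∈ s, c ≤ f y := by
      intro y hy
      obtain ⟨hy1, hy2⟩ := hy
      have hxy : |x - y| ≤ Real.sqrt t := by
        rw [abs_le]; constructor <;> linarith
      have hsq : (x - y) ^ 2 ≤ t := by
        have := sq_abs (x - y)
        nlinarith [Real.sq_sqrt h0.le]
      have he1 : Real.exp (-(1:ℝ)/2) ≤ Real.exp (-((x - y) ^ 2) / (2 * t)) := by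
        apply Real.exp_le_exp.mpr
        rw [div_le_div_iff₀ (by norm_num) (by positivity)]
        nlinarith
      have he2 : Real.exp (-lam * |x| - a * Real.sqrt t) ≤ Real.exp (-lam * |y|) := by
        apply Real.exp_le_exp.mpr
        have h4 : |(|y| - |x|)| ≤ |y - x| := abs_abs_sub_abs_le_abs_sub y x
        have h5 : |y - x| = |x - y| := abs_sub_comm y x
        have h6 : |lam * (|y| - |x|)| = a * |(|y| - |x|)| := abs_mul lam _
        have h8 : |(|y| - |x|)| ≤ Real.sqrt t := (h5 ▸ h4).trans hxy
        have h9 : lam * (|y| - |x|) ≤ a * Real.sqrt t :=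
          (le_abs_self _).trans (by rw [h6]; exact mul_le_mul_of_nonneg_left h8 ha0)
        have h10 : lam * (|y| - |x|) = lam * |y| - lam * |x| := by ring
        linarith
      show c ≤ heatKernel t (x - y) * Real.exp (-lam * |y|)
      rw [hc, heatKernel]
      exact mul_le_mul (mul_le_mul_of_nonneg_left he1 hKpos.le) he2 (Real.exp_pos _).le
        (by positivity)
    have hmeas : MeasurableSet s := measurableSet_Icc
    have hvol : (volume s).toReal = 2 * Real.sqrt t := by
      rw [hs, Real.volume_Icc, ENNReal.toReal_ofReal (by linarith)]
      ring
    have step1 : c * (2 * Real.sqrt t) ≤ ∫ y in s, f y := by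
      rw [← hvol]
      exact setIntegral_ge_of_const_le_real hmeas (by rw [hs, Real.volume_Icc]; exact ENNReal.ofReal_ne_top)
        hlow hint.integrableOn
    have step2 : (∫ y in s, f y) ≤ ∫ y, f y := by
      apply setIntegral_le_integral hint
      filter_upwards with y
      show 0 ≤ heatKernel t (x - y) * Real.exp (-lam * |y|)
      unfold heatKernel; positivity
    refine le_trans ?_ (step1.trans step2)
    -- final arithmetic
    have hsplit : Real.sqrt (2 * Real.pi * t) = Real.sqrt (2 * Real.pi) * Real.sqrt t :=
      Real.sqrt_mul (by positivity) t
    have hc2 : c * (2 * Real.sqrt t) =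
        2 * (Real.sqrt (2 * Real.pi))⁻¹ * Real.exp (-(1:ℝ)/2) *
          Real.exp (-a * Real.sqrt t) * Real.exp (-lam * |x|) := by
      rw [hc, hsplit, mul_inv, sub_eq_add_neg, Real.exp_add]
      field_simp
    rw [hc2]
    have hmin : min 1 (2 * (Real.sqrt (2 * Real.pi))⁻¹ * Real.exp (-(1:ℝ)/2) *
        Real.exp (-a * Real.sqrt T)) ≤ 2 * (Real.sqrt (2 * Real.pi))⁻¹ *
        Real.exp (-(1:ℝ)/2) * Real.exp (-a * Real.sqrt t) := by
      refine (min_le_right _ _).trans ?_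
      have hexp : Real.exp (-a * Real.sqrt T) ≤ Real.exp (-a * Real.sqrt t) := by
        apply Real.exp_le_exp.mpr
        have : Real.sqrt t ≤ Real.sqrt T := Real.sqrt_le_sqrt htT
        nlinarith
      have hpos : (0:ℝ) < 2 * (Real.sqrt (2 * Real.pi))⁻¹ * Real.exp (-(1:ℝ)/2) := by
        have : 0 < Real.sqrt (2 * Real.pi) := Real.sqrt_pos.mpr (by positivity)
        positivity
      nlinarith
    exact mul_le_mul_of_nonneg_right hmin (Real.exp_pos _).le
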